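/- arXiv:1201.0435 — 3 statements merged into one kernel-verified Lean document; each statement's English description precedes it below -/
import Mathlib

section
/- Let N=(V,E,s,t) be an acyclic unit-capacity point-to-point network with C_N(s,t) ≥ 2. Then every edge lying on some directed s-t path is contained in some 2-CF of N. -/
set_option linter.unusedSectionVars false
set_option maxHeartbeats 1000000


/-- A point-to-point network: a finite directed multigraph with edge set
`edges`, endpoint maps `tail`/`head`, source `s` and sink `t`; every edge has
unit capacity. -/
structure Network (V : Type) (ε : Type) where
  edges : Finset ε
  tail : ε → V
  head : ε → V
  s : V
  t : V

namespace Network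

variable {V ε : Type} [DecidableEq ε]

/-- `p` is a nonempty directed walk from `u` to `v` using edges of `N`. -/
def IsWalk (N : Network V ε) (u v : V) (p : List ε) : Prop :=
  p ≠ [] ∧ (∀ e ∈ p, e ∈ N.edges) ∧
  (∀ i, ∀ h : i + 1 < p.length,
    N.head (p.get ⟨i, Nat.lt_of_succ_lt h⟩) = N.tail (p.get ⟨i + 1, h⟩)) ∧
  (∀ h : 0 < p.length, N.tail (p.get ⟨0, h⟩) = u) ∧
  (∀ h : 0 < p.length, N.head (p.get ⟨p.length - 1, Nat.sub_lt h Nat.one_pos⟩) = v)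

/-- An `s`-`t` path: an edge-simple walk from the source to the sink. -/
def IsPath (N : Network V ε) (p : List ε) : Prop :=
  N.IsWalk N.s N.t p ∧ p.Nodup

/-- `v` is reachable from `u` by a directed walk (or `u = v`). -/
def Reach (N : Network V ε) (u v : V) : Prop :=
  u = v ∨ ∃ p, N.IsWalk u v p

/-- Reachability within the subgraph induced by the vertex set `S`. -/
def ReachIn (N : Network V ε) (S : Set V) (u v : V) : Prop :=
  u = v ∨ ∃ p, N.IsWalk u v p ∧ ∀ e ∈ p, N.tail e ∈ S ∧ N.head e ∈ S

/-- An edge-simple directed cycle. -/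
def IsCycle (N : Network V ε) (p : List ε) : Prop :=
  ∃ u, N.IsWalk u u p ∧ p.Nodup

def Acyclic (N : Network V ε) : Prop := ∀ p, ¬ N.IsCycle p

/-- A collection of pairwise edge-disjoint `s`-`t` paths (an integral flow in a
unit-capacity network). -/
def IsFlowList (N : Network V ε) (fs : List (List ε)) : Prop :=
  (∀ p ∈ fs, N.IsPath p) ∧ fs.Pairwise fun p q => ∀ e ∈ p, e ∉ q

def HasFlow (N : Network V ε) (n : ℕ) : Prop :=
  ∃ fs, N.IsFlowList fs ∧ fs.length = n

/-- The maximum-flow value `C_N(s,t)`: the maximum number of pairwise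
edge-disjoint directed `s`-`t` paths. -/
noncomputable def maxFlow (N : Network V ε) : ℕ :=
  sSup {n | N.HasFlow n}

/-- Delete the edges of `F` from the network. -/
def del (N : Network V ε) (F : Finset ε) : Network V ε :=
  { N with edges := N.edges \ F }

/-- `F` is a `k`-th order capacity factor of `N`:
`C_{N\F} ≤ C_N − k`, and `C_{N\F'} > C_N − k` for every proper `F' ⊊ F`. -/
def IsKCF (N : Network V ε) (k : ℕ) (F : Finset ε) : Prop :=
  F.Nonempty ∧ F ⊆ N.edges ∧ (N.del F).maxFlow + k ≤ N.maxFlow ∧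
    ∀ F' ⊂ F, N.maxFlow < (N.del F').maxFlow + k

/-- `F` is a capacity factor of `N`: deleting `F` decreases the maximum flow,
while deleting any proper subset does not. -/
def IsCF (N : Network V ε) (F : Finset ε) : Prop :=
  F.Nonempty ∧ F ⊆ N.edges ∧ (N.del F).maxFlow < N.maxFlow ∧
    ∀ F' ⊂ F, (N.del F').maxFlow = N.maxFlow

/-- The set of edges used by a flow given as a list of paths. -/
def usedEdges (fs : List (List ε)) : Finset ε := fs.flatten.toFinset

/-- Residual network w.r.t. a set of used (unit-capacity) edges: used edges
are reversed, unused edges keep their direction. -/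
def residual (N : Network V ε) (used : Finset ε) : Network V ε :=
  { edges := N.edges,
    tail := fun e => if e ∈ used then N.head e else N.tail e,
    head := fun e => if e ∈ used then N.tail e else N.head e,
    s := N.s, t := N.t }

/-- The same network with sink replaced by `v`. -/
def withSink (N : Network V ε) (v : V) : Network V ε := { N with t := v }

variable {N : Network V ε} {u v w x : V} {p q : List ε} {e f : ε}

inductive Wk (N : Network V ε) : V → V → List ε → Prop
  | single {f : ε} : f ∈ N.edges → Wk N (N.tail f) (N.head f) [f]
  | cons {f : ε} {v : V} {p : List ε} : f ∈ N.edges → Wk N (N.head f) v p → Wk N (N.tail f) v (f :: p)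

theorem Wk.ne_nil {N : Network V ε} {u v : V} {p : List ε} (h : N.Wk u v p) :
    p ≠ [] := by cases h <;> simp

theorem isWalk_iff {N : Network V ε} {u v : V} {p : List ε} :
    N.IsWalk u v p ↔ N.Wk u v p := by
  induction p generalizing u with
  | nil =>
    constructor
    · rintro ⟨h, -⟩; exact absurd rfl h
    · rintro h; cases h
  | cons f p ih =>
    constructor
    · rintro ⟨-, hmem, hchain, hst, hend⟩
      have hu : N.tail f = u := hst (by simp)
      subst hu
      cases p with
      | nil =>
        have hv : N.head f = v := by simpa using hend (by simp)
        subst hv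
        exact Wk.single (hmem f (by simp))
      | cons g q =>
        refine Wk.cons (hmem f (by simp)) (ih.mp ?_)
        refine ⟨by simp, fun e he => hmem e (by simp [he]), ?_, ?_, ?_⟩
        · intro i h
          exact hchain (i+1) (by simpa using Nat.succ_lt_succ h)
        · intro h
          have := hchain 0 (by simp)
          simpa using this.symm
        · intro h
          have h2 : (f :: g :: q).length - 1 < (f :: g :: q).length := by simp
          have := hend (by simp)
          have e1 : (f :: g :: q).length - 1 = ((g :: q).length - 1) + 1 := by
            simp
          rw [show (⟨(f :: g :: q).length - 1, by simp⟩ : Fin (f :: g :: q).length)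
            = ⟨((g :: q).length - 1) + 1, by simp⟩ from by simp [e1]] at this
          simpa using this
    · intro h
      cases h with
      | single hf =>
        exact ⟨by simp, by simpa using hf, by simp, by simp, by simp⟩
      | cons hf hq =>
        obtain ⟨-, hmem, hchain, hst, hend⟩ := ih.mpr hq
        have hq0 : 0 < p.length := by
          cases p with
          | nil => exact absurd rfl hq.ne_nil
          | cons a b => simp
        refine ⟨by simp, ?_, ?_, by simp, ?_⟩
        · intro e he
          rcases List.mem_cons.mp he with rfl | he
          · exact hf
          · exact hmem e he
        · intro i h
          match i with
          | 0 =>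
            have := hst hq0
            simpa using this.symm
          | Nat.succ j =>
            have hj : j + 1 < p.length := by simpa using h
            have := hchain j hj
            simpa using this
        · intro h
          have := hend hq0
          have e1 : (f :: p).length - 1 = (p.length - 1) + 1 := by
            cases p with
            | nil => exact absurd rfl hq.ne_nil
            | cons a b => simp
          rw [show (⟨(f :: p).length - 1, by simp⟩ : Fin (f :: p).length)
            = ⟨(p.length - 1) + 1, by omega⟩ from Fin.ext (by simpa using e1)]
          simpa using this


variable {N : Network V ε} {u v w : V} {p q : List ε} {e f : ε}

theorem Wk.mem_edges (h : N.Wk u v p) : ∀ e ∈ p, e ∈ N.edges := by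
  induction h with
  | single hf => simpa
  | cons hf hq ih =>
    intro e he
    rcases List.mem_cons.mp he with rfl | he
    · exact hf
    · exact ih e he

theorem Wk.cons_inv (h : N.Wk u v (f :: q)) :
    u = N.tail f ∧ f ∈ N.edges ∧ ((q = [] ∧ v = N.head f) ∨ N.Wk (N.head f) v q) := by
  cases h with
  | single hf => exact ⟨rfl, hf, Or.inl ⟨rfl, rfl⟩⟩
  | cons hf hq => exact ⟨rfl, hf, Or.inr hq⟩

theorem Wk.append (h : N.Wk u v p) (h' : N.Wk v w q) : N.Wk u w (p ++ q) := by
  induction h with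
  | single hf => exact Wk.cons hf h'
  | cons hf hq ih => exact Wk.cons hf (ih h')

theorem Wk.split (h : N.Wk u w (p ++ q)) (hp : p ≠ []) (hq : q ≠ []) :
    ∃ v, N.Wk u v p ∧ N.Wk v w q := by
  induction p generalizing u with
  | nil => exact absurd rfl hp
  | cons f p ih =>
    rw [List.cons_append] at h
    obtain ⟨rfl, hf, hrest⟩ := h.cons_inv
    rcases hrest with ⟨hnil, -⟩ | hrest
    · exact absurd (List.append_eq_nil_iff.mp hnil).2 hq
    · cases p with
      | nil => exact ⟨N.head f, Wk.single hf, by simpa using hrest⟩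
      | cons g r =>
        obtain ⟨x, h1, h2⟩ := ih hrest (by simp)
        exact ⟨x, Wk.cons hf h1, h2⟩

theorem Wk.toSimple (h : N.Wk u v p) :
    ∃ q, N.Wk u v q ∧ q.Nodup ∧ ∀ e ∈ q, e ∈ p := by
  induction h with
  | single hf => exact ⟨_, Wk.single hf, by simp, by simp⟩
  | @cons f w p hf hq ih =>
    obtain ⟨q, hwq, hnd, hsub⟩ := ih
    by_cases hfq : f ∈ q
    · obtain ⟨q₁, q₂, rfl⟩ := List.append_of_mem hfq
      have key : (q₂ = [] ∧ w = N.head f) ∨ N.Wk (N.head f) w q₂ := by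
        cases q₁ with
        | nil => exact (Wk.cons_inv (by simpa using hwq)).2.2
        | cons a b =>
          obtain ⟨x, -, h2⟩ := hwq.split (by simp) (by simp)
          obtain ⟨rfl, -, h3⟩ := h2.cons_inv
          exact h3
      have hnd2 : f ∉ q₂ ∧ q₂.Nodup := by
        have h2 : (f :: q₂).Nodup := (List.nodup_append.mp hnd).2.1
        exact List.nodup_cons.mp h2
      rcases key with ⟨rfl, rfl⟩ | key
      · exact ⟨[f], Wk.single hf, by simp, by simp⟩
      · refine ⟨f :: q₂, Wk.cons hf key, by simp [hnd2.1, hnd2.2], ?_⟩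
        intro e he
        rcases List.mem_cons.mp he with rfl | he
        · simp
        · simp [hsub e (by simp [he])]
    · refine ⟨f :: q, Wk.cons hf hwq, by simp [hfq, hnd], ?_⟩
      intro e he
      rcases List.mem_cons.mp he with rfl | he
      · simp
      · simp [hsub e he]

theorem noClosedWalk (hA : N.Acyclic) (h : N.Wk u u p) : False := by
  obtain ⟨q, hq, hnd, -⟩ := h.toSimple
  exact hA q ⟨u, isWalk_iff.mpr hq, hnd⟩

theorem Reach.trans_wk (h : N.Reach u v) (h' : N.Wk v w q) : N.Reach u w := by
  rcases h with rfl | ⟨p, hp⟩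
  · exact Or.inr ⟨q, isWalk_iff.mpr h'⟩
  · exact Or.inr ⟨p ++ q, isWalk_iff.mpr ((isWalk_iff.mp hp).append h')⟩

theorem Reach.closed (h : N.Reach u (N.tail f)) (hf : f ∈ N.edges) :
    N.Reach u (N.head f) :=
  h.trans_wk (Wk.single hf)

theorem Wk.reach_tail_head (h : N.Wk u v p) (he : e ∈ p) :
    N.Reach u (N.tail e) ∧ N.Reach (N.head e) v := by
  induction h with
  | single hf =>
    simp only [List.mem_singleton] at he; subst he
    exact ⟨Or.inl rfl, Or.inl rfl⟩
  | @cons f w p hf hq ih =>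
    rcases List.mem_cons.mp he with rfl | he
    · exact ⟨Or.inl rfl, Or.inr ⟨p, isWalk_iff.mpr hq⟩⟩
    · obtain ⟨h1, h2⟩ := ih he
      refine ⟨?_, h2⟩
      rcases h1 with h1 | ⟨q, hq2⟩
      · exact Or.inr ⟨[f], isWalk_iff.mpr (h1 ▸ Wk.single hf)⟩
      · exact Or.inr ⟨f :: q, isWalk_iff.mpr (Wk.cons hf (isWalk_iff.mp hq2))⟩


attribute [local instance] Classical.propDecidable

/-- contribution of edge `f` to the divergence at `x` -/
noncomputable def dAt (N : Network V ε) (x : V) (f : ε) : ℤ :=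
  (if N.head f = x then 1 else 0) - (if N.tail f = x then 1 else 0)

noncomputable def dv (N : Network V ε) (S : Finset ε) (x : V) : ℤ := ∑ f ∈ S, N.dAt x f

theorem dv_union {S T : Finset ε} (h : Disjoint S T) (x : V) :
    N.dv (S ∪ T) x = N.dv S x + N.dv T x := Finset.sum_union h

theorem dv_sdiff {S T : Finset ε} (h : S ⊆ T) (x : V) :
    N.dv (T \ S) x = N.dv T x - N.dv S x := by
  have := Finset.sum_sdiff (f := N.dAt x) h
  unfold dv; omega

theorem Wk.sum_dAt (h : N.Wk u v p) (x : V) :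
    (p.map (N.dAt x)).sum = (if v = x then 1 else 0) - (if u = x then 1 else 0) := by
  induction h with
  | single hf => simp [dAt, eq_comm]
  | cons hf hq ih => simp only [List.map_cons, List.sum_cons, ih, dAt, eq_comm]; ring

theorem dv_toFinset (hnd : p.Nodup) (x : V) :
    N.dv p.toFinset x = (p.map (N.dAt x)).sum := by
  unfold dv
  rw [List.sum_toFinset _ hnd]

theorem Wk.dv_eq (h : N.Wk u v p) (hnd : p.Nodup) (x : V) :
    N.dv p.toFinset x = (if v = x then 1 else 0) - (if u = x then 1 else 0) := by
  rw [dv_toFinset hnd, h.sum_dAt]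

theorem IsFlowList.nodup_flatten {fs : List (List ε)} (h : N.IsFlowList fs) :
    fs.flatten.Nodup := by
  rw [List.nodup_flatten]
  exact ⟨fun l hl => (h.1 l hl).2, h.2.imp fun hpq => fun a ha ha' => hpq a ha ha'⟩

theorem IsFlowList.dv_used {fs : List (List ε)} (h : N.IsFlowList fs) (x : V) :
    N.dv (usedEdges fs) x =
      fs.length * ((if N.t = x then 1 else 0) - (if N.s = x then 1 else 0)) := by
  rw [usedEdges, dv_toFinset h.nodup_flatten]
  induction fs with
  | nil => simp
  | cons p fs ih =>
    have hp := h.1 p (by simp)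
    have h' : N.IsFlowList fs := ⟨fun q hq => h.1 q (by simp [hq]), (List.pairwise_cons.mp h.2).2⟩
    have hnd' : fs.flatten.Nodup := h'.nodup_flatten
    rw [List.flatten_cons, List.map_append, List.sum_append,
      (isWalk_iff.mp hp.1).sum_dAt, ih h']
    simp only [List.length_cons]
    push_cast
    ring

theorem mem_usedEdges {fs : List (List ε)} :
    e ∈ usedEdges fs ↔ ∃ p ∈ fs, e ∈ p := by
  simp [usedEdges]

theorem usedEdges_subset {fs : List (List ε)} (h : N.IsFlowList fs) :
    usedEdges fs ⊆ N.edges := by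
  intro e he
  obtain ⟨p, hp, hep⟩ := mem_usedEdges.mp he
  exact (isWalk_iff.mp (h.1 p hp).1).mem_edges e hep

/-! ### transfer between networks -/

theorem Wk.mono {M : Network V ε} (hE : N.edges ⊆ M.edges) (ht : M.tail = N.tail)
    (hh : M.head = N.head) (h : N.Wk u v p) : M.Wk u v p := by
  induction h with
  | @single f hf =>
    have : M.Wk (M.tail f) (M.head f) [f] := Wk.single (hE hf)
    rwa [ht, hh] at this
  | @cons f w q hf hq ih =>
    have : M.Wk (M.tail f) w (f :: q) := Wk.cons (hE hf) (by rwa [hh])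
    rwa [ht] at this

theorem IsFlowList.mono {M : Network V ε} {fs : List (List ε)}
    (hE : N.edges ⊆ M.edges) (ht : M.tail = N.tail) (hh : M.head = N.head)
    (hs : M.s = N.s) (htk : M.t = N.t) (h : N.IsFlowList fs) : M.IsFlowList fs := by
  refine ⟨fun p hp => ⟨?_, (h.1 p hp).2⟩, h.2⟩
  have := ((isWalk_iff.mp (h.1 p hp).1).mono hE ht hh)
  rw [← hs, ← htk] at this
  exact isWalk_iff.mpr this

theorem IsFlowList.of_del {F : Finset ε} {fs : List (List ε)}
    (h : (N.del F).IsFlowList fs) : N.IsFlowList fs :=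
  Network.IsFlowList.mono (N := N.del F) (M := N) Finset.sdiff_subset rfl rfl rfl rfl h

theorem IsFlowList.del_mono {F F' : Finset ε} {fs : List (List ε)} (hF : F' ⊆ F)
    (h : (N.del F).IsFlowList fs) : (N.del F').IsFlowList fs :=
  Network.IsFlowList.mono (N := N.del F) (M := N.del F')
    (Finset.sdiff_subset_sdiff (le_refl _) hF) rfl rfl rfl rfl h

theorem Wk.to_del {F : Finset ε} (h : N.Wk u v p) (hF : ∀ e ∈ p, e ∉ F) :
    (N.del F).Wk u v p := by
  induction h with
  | @single f hf =>
    exact Wk.single (N := N.del F) (by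
      simp only [del, Finset.mem_sdiff]
      exact ⟨hf, hF f (by simp)⟩)
  | @cons f w q hf hq ih =>
    exact Wk.cons (N := N.del F)
      (by simp only [del, Finset.mem_sdiff]; exact ⟨hf, hF f (by simp)⟩)
      (ih fun e he => hF e (by simp [he]))

theorem IsFlowList.to_del {F : Finset ε} {fs : List (List ε)}
    (h : N.IsFlowList fs) (hF : ∀ p ∈ fs, ∀ e ∈ p, e ∉ F) : (N.del F).IsFlowList fs := by
  refine ⟨fun p hp => ⟨isWalk_iff.mpr ?_, (h.1 p hp).2⟩, h.2⟩
  exact (isWalk_iff.mp (h.1 p hp).1).to_del (hF p hp)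

/-! ### maxFlow basics -/

theorem IsFlowList.length_le {fs : List (List ε)} :
    ∀ {N : Network V ε}, N.IsFlowList fs → fs.length ≤ N.edges.card := by
  induction fs with
  | nil => simp
  | cons p fs ih =>
    intro N h
    have hp := h.1 p (by simp)
    obtain ⟨a, q, rfl⟩ : ∃ a q, p = a :: q := by
      cases hw : p with
      | nil => exact absurd (hw ▸ hp.1).1 (by simp)
      | cons a q => exact ⟨a, q, rfl⟩
    have ha : a ∈ N.edges := (isWalk_iff.mp hp.1).mem_edges a (by simp)
    have h' : (N.del {a}).IsFlowList fs := by
      refine IsFlowList.to_del ⟨fun q hq => h.1 q (by simp [hq]),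
        (List.pairwise_cons.mp h.2).2⟩ ?_
      intro q hq e he
      simp only [Finset.mem_singleton]
      rintro rfl
      exact (List.pairwise_cons.mp h.2).1 q hq e (by simp) he
    have := ih h'
    have hcard : (N.edges \ ({a} : Finset ε)).card = N.edges.card - 1 := by
      rw [Finset.card_sdiff_of_subset (by simpa using ha)]
      simp
    have hpos : 0 < N.edges.card := Finset.card_pos.mpr ⟨a, ha⟩
    simp only [del] at this
    simp only [List.length_cons]
    omega


theorem hasFlow_zero : N.HasFlow 0 := ⟨[], ⟨by simp, by simp⟩, rfl⟩

theorem bddAbove_hasFlow : BddAbove {n | N.HasFlow n} := by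
  refine ⟨N.edges.card, ?_⟩
  rintro n ⟨fs, hfs, rfl⟩
  exact hfs.length_le

theorem hasFlow_maxFlow : N.HasFlow N.maxFlow :=
  Nat.sSup_mem ⟨0, by exact hasFlow_zero⟩ bddAbove_hasFlow

theorem HasFlow.le_maxFlow {n : ℕ} (h : N.HasFlow n) : n ≤ N.maxFlow :=
  le_csSup bddAbove_hasFlow h

theorem maxFlow_le {m : ℕ} (h : ∀ n, N.HasFlow n → n ≤ m) : N.maxFlow ≤ m :=
  csSup_le ⟨0, by exact hasFlow_zero⟩ h

theorem maxFlow_del_mono {F F' : Finset ε} (hF : F' ⊆ F) :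
    (N.del F).maxFlow ≤ (N.del F').maxFlow := by
  obtain ⟨fs, hfs, hlen⟩ := hasFlow_maxFlow (N := N.del F)
  exact hlen ▸ HasFlow.le_maxFlow ⟨fs, hfs.del_mono hF, rfl⟩

/-! ### counting -/

theorem dv_eq_card_sub_card (S : Finset ε) (x : V) :
    N.dv S x = ((S.filter (fun f => N.head f = x)).card : ℤ)
      - ((S.filter (fun f => N.tail f = x)).card : ℤ) := by
  unfold dv dAt
  rw [Finset.sum_sub_distrib]
  simp [Finset.sum_boole]

theorem Wk.length_le_card (h : N.Wk u v p) (hnd : p.Nodup) :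
    p.length ≤ N.edges.card := by
  rw [← List.toFinset_card_of_nodup hnd]
  exact Finset.card_le_card fun e he => h.mem_edges e (List.mem_toFinset.mp he)

theorem Wk.extend (h : N.Wk N.s x p) (hnd : p.Nodup) (hx : x ≠ N.t) (k : ℕ) (hk : 1 ≤ k)
    (hd : ∀ y, N.dv N.edges y =
      k * ((if N.t = y then 1 else 0) - (if N.s = y then 1 else 0))) :
    ∃ f ∈ N.edges, f ∉ p ∧ N.tail f = x := by
  by_contra hcon
  push_neg at hcon
  have hsub : p.toFinset ⊆ N.edges := fun e he => h.mem_edges e (List.mem_toFinset.mp he)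
  have hA : N.edges.filter (fun f => N.tail f = x) ⊆
      p.toFinset.filter (fun f => N.tail f = x) := by
    intro f hf
    simp only [Finset.mem_filter] at hf ⊢
    refine ⟨List.mem_toFinset.mpr ?_, hf.2⟩
    by_contra hfp
    exact hcon f hf.1 hfp hf.2
  have hB : p.toFinset.filter (fun f => N.head f = x) ⊆
      N.edges.filter (fun f => N.head f = x) :=
    Finset.filter_subset_filter _ hsub
  have hcA := Finset.card_le_card hA
  have hcB := Finset.card_le_card hB
  have e1 := dv_eq_card_sub_card (N := N) N.edges x
  have e2 := dv_eq_card_sub_card (N := N) p.toFinset x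
  have e3 := h.dv_eq hnd x
  have e4 := hd x
  have hxt : N.t ≠ x := fun hh => hx hh.symm
  have hk' : (1:ℤ) ≤ k := by exact_mod_cast hk
  by_cases hxs : N.s = x
  · rw [if_pos rfl, if_pos hxs] at e3
    rw [if_neg hxt, if_pos hxs] at e4
    rw [e2] at e3
    rw [e1] at e4
    nlinarith [e3, e4, hcA, hcB]
  · rw [if_pos rfl, if_neg hxs] at e3
    rw [if_neg hxt, if_neg hxs] at e4
    rw [e2] at e3
    rw [e1] at e4
    push_cast at e3 e4
    omega

theorem exists_start (k : ℕ) (hk : 1 ≤ k)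
    (hd : ∀ y, N.dv N.edges y =
      k * ((if N.t = y then 1 else 0) - (if N.s = y then 1 else 0)))
    (hst : N.s ≠ N.t) :
    ∃ f ∈ N.edges, N.tail f = N.s := by
  have e1 := dv_eq_card_sub_card (N := N) N.edges N.s
  have e4 := hd N.s
  rw [if_neg (fun hh => hst hh.symm), if_pos rfl] at e4
  rw [e1] at e4
  have hk' : (1:ℤ) ≤ k := by exact_mod_cast hk
  have hpos : 0 < (N.edges.filter (fun f => N.tail f = N.s)).card := by nlinarith
  obtain ⟨f, hf⟩ := Finset.card_pos.mp hpos
  simp only [Finset.mem_filter] at hf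
  exact ⟨f, hf.1, hf.2⟩

theorem grow (k : ℕ) (hk : 1 ≤ k)
    (hd : ∀ y, N.dv N.edges y =
      k * ((if N.t = y then 1 else 0) - (if N.s = y then 1 else 0))) :
    ∀ (n : ℕ) (p : List ε) (x : V), N.Wk N.s x p → p.Nodup →
      N.edges.card ≤ p.length + n → ∃ q, N.Wk N.s N.t q ∧ q.Nodup := by
  intro n
  induction n with
  | zero =>
    intro p x hw hnd hcard
    by_cases hx : x = N.t
    · exact ⟨p, hx ▸ hw, hnd⟩
    · obtain ⟨f, hf, hfp, hft⟩ := hw.extend hnd hx k hk hd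
      have hw' : N.Wk N.s (N.head f) (p ++ [f]) := hw.append (hft ▸ Wk.single hf)
      have hnd' : (p ++ [f]).Nodup := by
        rw [List.nodup_append]
        exact ⟨hnd, by simp, fun a ha b hb hab => hfp (by simp at hb; subst hb; exact hab ▸ ha)⟩
      have := hw'.length_le_card hnd'
      simp at this
      omega
  | succ n ih =>
    intro p x hw hnd hcard
    by_cases hx : x = N.t
    · exact ⟨p, hx ▸ hw, hnd⟩
    · obtain ⟨f, hf, hfp, hft⟩ := hw.extend hnd hx k hk hd
      have hw' : N.Wk N.s (N.head f) (p ++ [f]) := hw.append (hft ▸ Wk.single hf)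
      have hnd' : (p ++ [f]).Nodup := by
        rw [List.nodup_append]
        exact ⟨hnd, by simp, fun a ha b hb hab => hfp (by simp at hb; subst hb; exact hab ▸ ha)⟩
      exact ih (p ++ [f]) (N.head f) hw' hnd' (by simp; omega)

theorem exists_path_of_dv (k : ℕ) (hk : 1 ≤ k)
    (hd : ∀ y, N.dv N.edges y =
      k * ((if N.t = y then 1 else 0) - (if N.s = y then 1 else 0)))
    (hst : N.s ≠ N.t) :
    ∃ q, N.Wk N.s N.t q ∧ q.Nodup := by
  obtain ⟨f, hf, hft⟩ := exists_start (N := N) k hk hd hst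
  exact grow (N := N) k hk hd N.edges.card [f] (N.head f) (hft ▸ Wk.single hf)
    (by simp) (by simp)


@[simp] theorem del_t (F : Finset ε) : (N.del F).t = N.t := rfl
@[simp] theorem del_s (F : Finset ε) : (N.del F).s = N.s := rfl
@[simp] theorem del_tail (F : Finset ε) : (N.del F).tail = N.tail := rfl
@[simp] theorem del_head (F : Finset ε) : (N.del F).head = N.head := rfl
@[simp] theorem del_edges (F : Finset ε) : (N.del F).edges = N.edges \ F := rfl

theorem Acyclic.del (hA : N.Acyclic) (F : Finset ε) : (N.del F).Acyclic := by
  rintro p ⟨u, hw, hnd⟩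
  exact hA p ⟨u, isWalk_iff.mpr
    (Wk.mono (N := N.del F) (M := N) Finset.sdiff_subset rfl rfl (isWalk_iff.mp hw)), hnd⟩

theorem exists_flowList_of_dv :
    ∀ (k : ℕ) (M : Network V ε), M.s ≠ M.t →
      (∀ y, M.dv M.edges y =
        k * ((if M.t = y then 1 else 0) - (if M.s = y then 1 else 0))) →
      ∃ fs, M.IsFlowList fs ∧ fs.length = k := by
  intro k
  induction k with
  | zero => exact fun M _ _ => ⟨[], ⟨by simp, by simp⟩, rfl⟩
  | succ k ih =>
    intro M hst hd
    obtain ⟨p, hw, hnd⟩ := exists_path_of_dv (N := M) (k+1) (by omega) hd hst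
    have hsub : p.toFinset ⊆ M.edges := fun e he => hw.mem_edges e (List.mem_toFinset.mp he)
    have hd' : ∀ y, (M.del p.toFinset).dv (M.del p.toFinset).edges y =
        k * ((if (M.del p.toFinset).t = y then 1 else 0)
          - (if (M.del p.toFinset).s = y then 1 else 0)) := by
      intro y
      have h0 : (M.del p.toFinset).dv (M.del p.toFinset).edges y
          = M.dv (M.edges \ p.toFinset) y := rfl
      rw [h0, dv_sdiff hsub, hd y, hw.dv_eq hnd y]
      simp only [del_t, del_s]
      push_cast
      split_ifs <;> simp [*] <;> ring
    obtain ⟨fs, hfs, hlen⟩ := ih (M.del p.toFinset) hst hd'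
    refine ⟨p :: fs, ⟨?_, ?_⟩, by simp [hlen]⟩
    · intro q hq
      rcases List.mem_cons.mp hq with rfl | hq
      · exact ⟨isWalk_iff.mpr hw, hnd⟩
      · exact hfs.of_del.1 q hq
    · rw [List.pairwise_cons]
      refine ⟨?_, hfs.of_del.2⟩
      intro q hq e hep heq
      have := (isWalk_iff.mp (hfs.1 q hq).1).mem_edges e heq
      rw [del_edges, Finset.mem_sdiff] at this
      exact this.2 (List.mem_toFinset.mpr hep)

theorem Wk.extend0 {w₀ : V} (h : N.Wk w₀ x p) (hnd : p.Nodup) (hx : x ≠ w₀)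
    (hd : ∀ y, N.dv N.edges y = 0) :
    ∃ f ∈ N.edges, f ∉ p ∧ N.tail f = x := by
  by_contra hcon
  push_neg at hcon
  have hsub : p.toFinset ⊆ N.edges := fun e he => h.mem_edges e (List.mem_toFinset.mp he)
  have hA : N.edges.filter (fun f => N.tail f = x) ⊆
      p.toFinset.filter (fun f => N.tail f = x) := by
    intro f hf
    simp only [Finset.mem_filter] at hf ⊢
    refine ⟨List.mem_toFinset.mpr ?_, hf.2⟩
    by_contra hfp
    exact hcon f hf.1 hfp hf.2
  have hB : p.toFinset.filter (fun f => N.head f = x) ⊆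
      N.edges.filter (fun f => N.head f = x) :=
    Finset.filter_subset_filter _ hsub
  have hcA := Finset.card_le_card hA
  have hcB := Finset.card_le_card hB
  have e1 := dv_eq_card_sub_card (N := N) N.edges x
  have e2 := dv_eq_card_sub_card (N := N) p.toFinset x
  have e3 := h.dv_eq hnd x
  have e4 := hd x
  rw [if_pos rfl, if_neg (fun hh => hx hh.symm)] at e3
  rw [e2] at e3
  rw [e1] at e4
  push_cast at e3 e4
  omega

theorem edges_eq_empty_of_dv_zero (hA : N.Acyclic) (hd : ∀ y, N.dv N.edges y = 0) :
    N.edges = ∅ := by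
  by_contra hne
  obtain ⟨f, hf⟩ := Finset.nonempty_iff_ne_empty.mpr hne
  have grow2 : ∀ (n : ℕ) (p : List ε) (x : V), N.Wk (N.tail f) x p → p.Nodup →
      N.edges.card ≤ p.length + n → False := by
    intro n
    induction n with
    | zero =>
      intro p x hw hnd hcard
      by_cases hx : x = N.tail f
      · exact hA p ⟨x, isWalk_iff.mpr (hx ▸ hw), hnd⟩
      · obtain ⟨g, hg, hgp, hgt⟩ := hw.extend0 hnd hx hd
        have hw' : N.Wk (N.tail f) (N.head g) (p ++ [g]) := hw.append (hgt ▸ Wk.single hg)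
        have hnd' : (p ++ [g]).Nodup := by
          rw [List.nodup_append]
          exact ⟨hnd, by simp, fun a ha b hb hab => hgp (by simp at hb; subst hb; exact hab ▸ ha)⟩
        have := hw'.length_le_card hnd'
        simp at this
        omega
    | succ n ih =>
      intro p x hw hnd hcard
      by_cases hx : x = N.tail f
      · exact hA p ⟨x, isWalk_iff.mpr (hx ▸ hw), hnd⟩
      · obtain ⟨g, hg, hgp, hgt⟩ := hw.extend0 hnd hx hd
        have hw' : N.Wk (N.tail f) (N.head g) (p ++ [g]) := hw.append (hgt ▸ Wk.single hg)
        have hnd' : (p ++ [g]).Nodup := by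
          rw [List.nodup_append]
          exact ⟨hnd, by simp, fun a ha b hb hab => hgp (by simp at hb; subst hb; exact hab ▸ ha)⟩
        exact ih (p ++ [g]) (N.head g) hw' hnd' (by simp; omega)
  exact grow2 N.edges.card [f] (N.head f) (Wk.single hf) (by simp) (by simp)


theorem IsFlowList.sublist {fs fs' : List (List ε)} (hsl : List.Sublist fs' fs)
    (h : N.IsFlowList fs) : N.IsFlowList fs' :=
  ⟨fun p hp => h.1 p (hsl.subset hp), h.2.sublist hsl⟩

theorem IsFlowList.drop_one {fs : List (List ε)} {q : List ε}
    (h : N.IsFlowList fs) (hq : q ∈ fs) (hlen : 2 ≤ fs.length) :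
    ∃ fs', N.IsFlowList fs' ∧ fs'.length = fs.length - 1 ∧ q ∈ fs' := by
  obtain ⟨l₁, l₂, rfl⟩ := List.append_of_mem hq
  cases l₁ with
  | nil =>
    cases l₂ with
    | nil => simp at hlen
    | cons b l₂ =>
      refine ⟨q :: l₂, h.sublist ?_, by simp, by simp⟩
      exact List.Sublist.cons₂ q (List.sublist_cons_self b l₂)
  | cons a l₁ =>
    refine ⟨l₁ ++ q :: l₂, h.sublist ?_, by simp, by simp⟩
    exact List.Sublist.append (List.sublist_cons_self a l₁) (List.Sublist.refl _)

theorem exists_flow_through (hA : N.Acyclic) {C : ℕ} (hC : 2 ≤ C) (hCflow : N.HasFlow C)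
    {P : List ε} (hP : N.IsPath P) (heP : e ∈ P) :
    ∃ fs, N.IsFlowList fs ∧ fs.length = C - 1 ∧ ∃ p ∈ fs, e ∈ p := by
  have hwP : N.Wk N.s N.t P := isWalk_iff.mp hP.1
  have hst : N.s ≠ N.t := by
    rintro h
    exact noClosedWalk hA (h ▸ hwP)
  obtain ⟨qs, hqs, hqslen⟩ := hCflow
  by_cases he : ∃ q ∈ qs, e ∈ q
  · obtain ⟨q, hq, heq⟩ := he
    obtain ⟨fs', hfs', hlen', hqfs'⟩ := hqs.drop_one hq (by omega)
    exact ⟨fs', hfs', by omega, q, hqfs', heq⟩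
  · push_neg at he
    set K := usedEdges qs with hK
    set PE := P.toFinset with hPE
    have heK : e ∉ K := by
      rw [hK, mem_usedEdges]
      push_neg
      exact he
    have hePE : e ∈ PE := List.mem_toFinset.mpr heP
    have hKsub : K ⊆ N.edges := usedEdges_subset hqs
    have hPEsub : PE ⊆ N.edges := fun f hf => hwP.mem_edges f (List.mem_toFinset.mp hf)
    set G : Network V ε :=
      ⟨(K \ PE) ∪ (PE \ K),
       fun f => if f ∈ PE \ K then N.head f else N.tail f,
       fun f => if f ∈ PE \ K then N.tail f else N.head f,
       N.s, N.t⟩ with hG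
    have hGdv : ∀ S ⊆ G.edges, ∀ y,
        G.dv S y = N.dv (S \ PE) y - N.dv (S ∩ PE) y := by
      intro S hS y
      have hsplit : S = (S \ PE) ∪ (S ∩ PE) := by
        ext f; simp only [Finset.mem_union, Finset.mem_sdiff, Finset.mem_inter]; tauto
      have hdisj : Disjoint (S \ PE) (S ∩ PE) := by
        rw [Finset.disjoint_left]
        intro f hf hf'
        exact (Finset.mem_sdiff.mp hf).2 (Finset.mem_inter.mp hf').2
      rw [show G.dv S y = G.dv ((S \ PE) ∪ (S ∩ PE)) y from by rw [← hsplit],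
        dv_union hdisj]
      have h1 : G.dv (S \ PE) y = N.dv (S \ PE) y := by
        apply Finset.sum_congr rfl
        intro f hf
        have hfPE : f ∉ PE \ K := fun hc =>
          (Finset.mem_sdiff.mp hf).2 (Finset.mem_sdiff.mp hc).1
        simp only [dAt, hG, hfPE, if_neg, if_false]
      have h2 : G.dv (S ∩ PE) y = ∑ f ∈ S ∩ PE, -(N.dAt y f) := by
        apply Finset.sum_congr rfl
        intro f hf
        have hfPE : f ∈ PE \ K := by
          have hfG := hS (Finset.mem_inter.mp hf).1
          have hfP := (Finset.mem_inter.mp hf).2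
          simp only [hG, Finset.mem_union, Finset.mem_sdiff] at hfG
          rcases hfG with h | h
          · exact absurd hfP h.2
          · exact Finset.mem_sdiff.mpr h
        simp only [dAt, hG, hfPE, if_pos, if_true]
        ring
      rw [h1, h2, Finset.sum_neg_distrib]
      unfold dv
      ring
    have hdvPE : ∀ y, N.dv PE y = (if N.t = y then 1 else 0) - (if N.s = y then 1 else 0) :=
      fun y => hwP.dv_eq hP.2 y
    have hGedv : ∀ y, G.dv G.edges y =
        (C - 1 : ℕ) * ((if G.t = y then 1 else 0) - (if G.s = y then 1 else 0)) := by
      intro y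
      have hid1 : G.edges \ PE = K \ PE := by
        ext f
        simp only [hG, Finset.mem_sdiff, Finset.mem_union]
        tauto
      have hid2 : G.edges ∩ PE = PE \ K := by
        ext f
        simp only [hG, Finset.mem_inter, Finset.mem_union, Finset.mem_sdiff]
        tauto
      rw [hGdv G.edges (le_refl _) y, hid1, hid2]
      have hid3 : K \ PE = K \ (K ∩ PE) := by
        ext f; simp only [Finset.mem_sdiff, Finset.mem_inter]; tauto
      have hid4 : PE \ K = PE \ (K ∩ PE) := by
        ext f; simp only [Finset.mem_sdiff, Finset.mem_inter]; tauto
      rw [hid3, hid4, dv_sdiff (Finset.inter_subset_left),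
        dv_sdiff (Finset.inter_subset_right), hqs.dv_used, hdvPE]
      have hGt : G.t = N.t := rfl
      have hGs : G.s = N.s := rfl
      rw [hGt, hGs, hqslen]
      have : ((C : ℤ) - 1) = ((C - 1 : ℕ) : ℤ) := by
        have : 1 ≤ C := by omega
        push_cast [this]
        ring
      ring_nf
      rw [← this]
      ring
    obtain ⟨rs, hrs, hrslen⟩ := exists_flowList_of_dv (C - 1) G hst hGedv
    -- given any "sub-flow" rs' of rs not using e, construct an N-flow-set W
    have main : ∀ rs' : List (List ε), G.IsFlowList rs' → e ∉ usedEdges rs' →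
        ∃ fs, N.IsFlowList fs ∧ fs.length = 1 + rs'.length ∧ ∃ p ∈ fs, e ∈ p := by
      intro rs' hrs' heR
      set R : Finset ε := usedEdges rs' with hR
      have hRsub : R ⊆ G.edges := usedEdges_subset hrs'
      set W : Finset ε := (PE \ (R ∩ PE)) ∪ (R \ PE) with hW
      have hdisjW : Disjoint (PE \ (R ∩ PE)) (R \ PE) := by
        rw [Finset.disjoint_left]
        intro f hf hf'
        exact (Finset.mem_sdiff.mp hf').2 (Finset.mem_sdiff.mp hf).1
      have hWsub : W ⊆ N.edges := by
        intro f hf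
        rcases Finset.mem_union.mp hf with hf | hf
        · exact hPEsub (Finset.mem_sdiff.mp hf).1
        · have := hRsub (Finset.mem_sdiff.mp hf).1
          simp only [hG, Finset.mem_union, Finset.mem_sdiff] at this
          rcases this with h | h
          · exact hKsub h.1
          · exact absurd h.1 (Finset.mem_sdiff.mp hf).2
      have heW : e ∈ W := by
        refine Finset.mem_union_left _ (Finset.mem_sdiff.mpr ⟨hePE, ?_⟩)
        intro hc
        exact heR (Finset.mem_inter.mp hc).1
      have hdvW : ∀ y, N.dv W y =
          (1 + rs'.length : ℕ) * ((if N.t = y then 1 else 0) - (if N.s = y then 1 else 0)) := by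
        intro y
        rw [hW, dv_union hdisjW, dv_sdiff (Finset.inter_subset_right)]
        have hGdvR := hGdv R hRsub y
        have hGdvused := hrs'.dv_used (N := G) y
        have hGt : G.t = N.t := rfl
        have hGs : G.s = N.s := rfl
        rw [hGt, hGs] at hGdvused
        rw [hdvPE]
        have : N.dv (R \ PE) y - N.dv (R ∩ PE) y
            = (rs'.length : ℤ) * ((if N.t = y then 1 else 0) - (if N.s = y then 1 else 0)) := by
          rw [← hGdvR, hGdvused]
        push_cast
        linarith [this]
      -- the network with edge set W
      set M₀ : Network V ε := N.del (N.edges \ W) with hM₀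
      have hM₀edges : M₀.edges = W := by
        rw [hM₀, del_edges]
        ext f
        simp only [Finset.mem_sdiff, not_and, not_not]
        constructor
        · rintro ⟨h1, h2⟩; exact h2 h1
        · intro h; exact ⟨hWsub h, fun _ => h⟩
      have hM₀dv : ∀ y, M₀.dv M₀.edges y =
          (1 + rs'.length : ℕ) * ((if M₀.t = y then 1 else 0) - (if M₀.s = y then 1 else 0)) := by
        intro y
        have h0 : M₀.dv M₀.edges y = N.dv W y := by rw [hM₀edges]; rfl
        rw [h0, hdvW y]
        rfl
      obtain ⟨fs, hfs, hfslen⟩ := exists_flowList_of_dv (1 + rs'.length) M₀ hst hM₀dv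
      -- the decomposition covers all of W, in particular e
      have hcover : M₀.edges \ usedEdges fs = ∅ := by
        have hused : usedEdges fs ⊆ M₀.edges := usedEdges_subset hfs
        refine edges_eq_empty_of_dv_zero (N := M₀.del (usedEdges fs)) ((hA.del _).del _) ?_
        intro y
        have h0 : (M₀.del (usedEdges fs)).dv (M₀.del (usedEdges fs)).edges y
            = M₀.dv (M₀.edges \ usedEdges fs) y := rfl
        rw [h0, dv_sdiff hused, hM₀dv y]
        have : M₀.dv (usedEdges fs) y = (1 + rs'.length : ℕ) *
            ((if M₀.t = y then 1 else 0) - (if M₀.s = y then 1 else 0)) := by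
          rw [hfs.dv_used, hfslen]
        rw [this]
        ring
      have heused : e ∈ usedEdges fs := by
        by_contra hc
        have : e ∈ M₀.edges \ usedEdges fs := Finset.mem_sdiff.mpr ⟨hM₀edges ▸ heW, hc⟩
        rw [hcover] at this
        exact absurd this (Finset.notMem_empty e)
      obtain ⟨p, hpfs, hep⟩ := mem_usedEdges.mp heused
      exact ⟨fs, hfs.of_del, hfslen ▸ rfl, p, hpfs, hep⟩
    by_cases heRall : e ∈ usedEdges rs
    · -- remove the path of rs containing e
      obtain ⟨r, hr, her⟩ := mem_usedEdges.mp heRall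
      obtain ⟨l₁, l₂, rfl⟩ := List.append_of_mem hr
      have hsl : List.Sublist (l₁ ++ l₂) (l₁ ++ r :: l₂) :=
        List.Sublist.append (List.Sublist.refl _) (List.sublist_cons_self r l₂)
      have hrs'fl : G.IsFlowList (l₁ ++ l₂) := hrs.sublist hsl
      have heR' : e ∉ usedEdges (l₁ ++ l₂) := by
        rw [mem_usedEdges]
        rintro ⟨q, hq, heq⟩
        have hpw := List.pairwise_append.mp hrs.2
        rcases List.mem_append.mp hq with hq | hq
        · exact hpw.2.2 q hq r (by simp) e heq her
        · exact (List.pairwise_cons.mp hpw.2.1).1 q hq e her heq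
      obtain ⟨fs, h1, h2, h3⟩ := main (l₁ ++ l₂) hrs'fl heR'
      refine ⟨fs, h1, ?_, h3⟩
      have : (l₁ ++ r :: l₂).length = C - 1 := hrslen
      simp only [List.length_append, List.length_cons] at this
      simp only [List.length_append] at h2
      omega
    · obtain ⟨fs, h1, h2, p, hp, hep⟩ := main rs hrs heRall
      obtain ⟨fs', h1', h2', hp'⟩ := h1.drop_one hp (by omega)
      exact ⟨fs', h1', by omega, p, hp', hep⟩


theorem Reach.trans {a b c : V} (h1 : N.Reach a b) (h2 : N.Reach b c) : N.Reach a c := by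
  rcases h2 with rfl | ⟨q, hq⟩
  · exact h1
  · exact h1.trans_wk (isWalk_iff.mp hq)

section Crossing

variable (T : Set V)

theorem Wk.tails_in (hcl : ∀ f ∈ N.edges, N.tail f ∈ T → N.head f ∈ T)
    {x b : V} {q : List ε} (h : N.Wk x b q) (hx : x ∈ T) :
    ∀ g ∈ q, N.tail g ∈ T := by
  induction h with
  | single hf =>
    intro g hg
    simp only [List.mem_singleton] at hg
    subst hg
    exact hx
  | @cons f w q hf hq ih =>
    intro g hg
    rcases List.mem_cons.mp hg with rfl | hg
    · exact hx
    · exact ih (hcl f hf hx) g hg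

theorem Wk.exists_crossing {a b : V} {p : List ε} (h : N.Wk a b p) (hb : b ∈ T) :
    a ∉ T → ∃ f ∈ p, N.tail f ∉ T ∧ N.head f ∈ T := by
  induction h with
  | single hf => exact fun ha => ⟨_, by simp, ha, hb⟩
  | @cons f w q hf hq ih =>
    intro ha
    by_cases hT : N.head f ∈ T
    · exact ⟨f, by simp, ha, hT⟩
    · obtain ⟨g, hg, h1, h2⟩ := ih hb hT
      exact ⟨g, by simp [hg], h1, h2⟩

theorem Wk.crossing_unique (hcl : ∀ f ∈ N.edges, N.tail f ∈ T → N.head f ∈ T)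
    {a b : V} {p : List ε} (h : N.Wk a b p) {f g : ε}
    (hf : f ∈ p) (hg : g ∈ p) (hf1 : N.tail f ∉ T) (hf2 : N.head f ∈ T)
    (hg1 : N.tail g ∉ T) (hg2 : N.head g ∈ T) : f = g := by
  induction h with
  | single hfe =>
    simp only [List.mem_singleton] at hf hg
    rw [hf, hg]
  | @cons h₀ w q hh hq ih =>
    rcases List.mem_cons.mp hf with rfl | hf'
    · rcases List.mem_cons.mp hg with rfl | hg'
      · rfl
      · exact absurd (hq.tails_in T hcl hf2 g hg') hg1
    · rcases List.mem_cons.mp hg with rfl | hg'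
      · exact absurd (hq.tails_in T hcl hg2 f hf') hf1
      · exact ih hf' hg'

theorem crossing_card_le (hcl : ∀ f ∈ N.edges, N.tail f ∈ T → N.head f ∈ T)
    {gs : List (List ε)} (hgs : ∀ q ∈ gs, N.Wk N.s N.t q) :
    ((usedEdges gs).filter (fun f => N.tail f ∉ T ∧ N.head f ∈ T)).card ≤ gs.length := by
  induction gs with
  | nil => simp [usedEdges]
  | cons p gs ih =>
    have hu : usedEdges (p :: gs) = p.toFinset ∪ usedEdges gs := by
      simp [usedEdges]
    rw [hu, Finset.filter_union]
    have h1 : (p.toFinset.filter (fun f => N.tail f ∉ T ∧ N.head f ∈ T)).card ≤ 1 := by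
      rw [Finset.card_le_one]
      intro f hf g hg
      simp only [Finset.mem_filter, List.mem_toFinset] at hf hg
      exact (hgs p (by simp)).crossing_unique T hcl hf.1 hg.1 hf.2.1 hf.2.2 hg.2.1 hg.2.2
    have h2 := ih (fun q hq => hgs q (by simp [hq]))
    calc ((p.toFinset.filter _) ∪ (usedEdges gs).filter _).card
        ≤ (p.toFinset.filter _).card + ((usedEdges gs).filter _).card :=
          Finset.card_union_le _ _
      _ ≤ gs.length + 1 := by omega
      _ = (p :: gs).length := by simp

theorem length_le_crossing_card {gs : List (List ε)} (hgs : ∀ q ∈ gs, N.Wk N.s N.t q)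
    (hpw : gs.Pairwise fun p q => ∀ x ∈ p, x ∉ q) (hs : N.s ∉ T) (ht : N.t ∈ T) :
    gs.length ≤ ((usedEdges gs).filter (fun f => N.tail f ∉ T ∧ N.head f ∈ T)).card := by
  induction gs with
  | nil => simp
  | cons p gs ih =>
    obtain ⟨f, hfp, hf1, hf2⟩ := (hgs p (by simp)).exists_crossing T ht hs
    have hpwc := List.pairwise_cons.mp hpw
    have hnotin : f ∉ (usedEdges gs).filter (fun f => N.tail f ∉ T ∧ N.head f ∈ T) := by
      intro hc
      obtain ⟨q, hq, hfq⟩ := mem_usedEdges.mp (Finset.mem_filter.mp hc).1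
      exact hpwc.1 q hq f hfp hfq
    have hins : insert f ((usedEdges gs).filter (fun f => N.tail f ∉ T ∧ N.head f ∈ T))
        ⊆ (usedEdges (p :: gs)).filter (fun f => N.tail f ∉ T ∧ N.head f ∈ T) := by
      intro g hg
      rcases Finset.mem_insert.mp hg with rfl | hg
      · exact Finset.mem_filter.mpr ⟨mem_usedEdges.mpr ⟨p, by simp, hfp⟩, hf1, hf2⟩
      · have := Finset.mem_filter.mp hg
        exact Finset.mem_filter.mpr ⟨mem_usedEdges.mpr (by
          obtain ⟨q, hq, hgq⟩ := mem_usedEdges.mp this.1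
          exact ⟨q, by simp [hq], hgq⟩), this.2⟩
    have := Finset.card_le_card hins
    rw [Finset.card_insert_of_notMem hnotin] at this
    have h2 := ih (fun q hq => hgs q (by simp [hq])) hpwc.2
    simp only [List.length_cons]
    omega

end Crossing


theorem maxFlow_del_le_of_flow_through (hA : N.Acyclic) {fs : List (List ε)}
    (hfs : N.IsFlowList fs) {P : List ε} (hP : N.IsPath P) (heP : e ∈ P)
    (hefs : ∃ p ∈ fs, e ∈ p) :
    (N.del ((N.edges \ usedEdges fs) ∪ {e})).maxFlow + 1 ≤ fs.length := by
  have hwP : N.Wk N.s N.t P := isWalk_iff.mp hP.1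
  have heE : e ∈ N.edges := hwP.mem_edges e heP
  set T : Set V := {x | N.Reach (N.head e) x} with hT
  have hvT : N.head e ∈ T := Or.inl rfl
  have hcl : ∀ f ∈ N.edges, N.tail f ∈ T → N.head f ∈ T := fun f hf hx =>
    Reach.closed hx hf
  obtain ⟨ρ1, ρ2⟩ := hwP.reach_tail_head heP
  have huT : N.tail e ∉ T := by
    intro hc
    rcases hc with hc | ⟨q, hq⟩
    · exact noClosedWalk hA (show N.Wk (N.tail e) (N.tail e) [e] from hc ▸ Wk.single heE)
    · exact noClosedWalk hA ((isWalk_iff.mp hq).append (Wk.single heE))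
  have hsT : N.s ∉ T := fun hc => huT (hc.trans ρ1)
  have htT : N.t ∈ T := ρ2
  set CE := (usedEdges fs).filter (fun f => N.tail f ∉ T ∧ N.head f ∈ T) with hCE
  have heCE : e ∈ CE := by
    obtain ⟨p, hp, hep⟩ := hefs
    exact Finset.mem_filter.mpr ⟨mem_usedEdges.mpr ⟨p, hp, hep⟩, huT, hvT⟩
  have hCEcard : CE.card ≤ fs.length :=
    crossing_card_le T hcl (fun q hq => isWalk_iff.mp (hfs.1 q hq).1)
  have hlen1 : 1 ≤ fs.length := by
    obtain ⟨p, hp, -⟩ := hefs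
    exact List.length_pos_iff.mpr (List.ne_nil_of_mem hp)
  have hub : (N.del ((N.edges \ usedEdges fs) ∪ {e})).maxFlow ≤ fs.length - 1 := by
    apply maxFlow_le
    rintro n ⟨gs, hgs, rfl⟩
    have hlow := length_le_crossing_card T
      (fun q hq => isWalk_iff.mp ((hgs.of_del).1 q hq).1) hgs.2 hsT htT
    have hsubCE : (usedEdges gs).filter (fun f => N.tail f ∉ T ∧ N.head f ∈ T)
        ⊆ CE.erase e := by
      intro g hg
      obtain ⟨hg1, hg2⟩ := Finset.mem_filter.mp hg
      have hgM := usedEdges_subset hgs hg1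
      rw [del_edges, Finset.mem_sdiff] at hgM
      obtain ⟨hgE, hgno⟩ := hgM
      rw [Finset.mem_union, Finset.mem_sdiff, Finset.mem_singleton] at hgno
      push_neg at hgno
      exact Finset.mem_erase.mpr ⟨hgno.2, Finset.mem_filter.mpr ⟨hgno.1 hgE, hg2⟩⟩
    have hcard := Finset.card_le_card hsubCE
    rw [Finset.card_erase_of_mem heCE] at hcard
    omega
  omega

theorem exists_minimal_q (Q : Finset ε → Prop) (D : Finset ε) (hD : Q D) :
    ∃ D', D' ⊆ D ∧ Q D' ∧ ∀ D'' ⊂ D', ¬ Q D'' := by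
  revert hD
  induction D using Finset.strongInduction with
  | _ D ih =>
    intro hD
    by_cases h : ∃ t ⊂ D, Q t
    · obtain ⟨t, ht, hQt⟩ := h
      obtain ⟨D', h1, h2, h3⟩ := ih t ht hQt
      exact ⟨D', h1.trans ht.subset, h2, h3⟩
    · push_neg at h
      exact ⟨D, le_refl _, hD, h⟩

theorem main_theorem (hA : N.Acyclic) (hflow : 2 ≤ N.maxFlow) :
    ∀ e, (∃ p, N.IsPath p ∧ e ∈ p) → ∃ F, N.IsKCF 2 F ∧ e ∈ F := by
  rintro e ⟨P, hP, heP⟩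
  have heE : e ∈ N.edges := (isWalk_iff.mp hP.1).mem_edges e heP
  obtain ⟨fs, hfs, hlen, hef⟩ :=
    exists_flow_through (e := e) hA hflow hasFlow_maxFlow hP heP
  have hBB := maxFlow_del_le_of_flow_through hA hfs hP heP hef
  rw [hlen] at hBB
  set Q : Finset ε → Prop := fun D =>
    D ⊆ N.edges ∧ (N.del (D ∪ {e})).maxFlow + 2 ≤ N.maxFlow
      ∧ N.maxFlow ≤ (N.del D).maxFlow + 1 with hQ
  have hQD₀ : Q (N.edges \ usedEdges fs) := by
    refine ⟨Finset.sdiff_subset, by omega, ?_⟩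
    have : (N.del (N.edges \ usedEdges fs)).HasFlow (N.maxFlow - 1) := by
      refine ⟨fs, hfs.to_del ?_, hlen⟩
      intro p hp x hx
      rw [Finset.mem_sdiff]
      rintro ⟨-, hxH⟩
      exact hxH (mem_usedEdges.mpr ⟨p, hp, hx⟩)
    have := this.le_maxFlow
    omega
  obtain ⟨D', hD'sub, hQD', hmin⟩ := exists_minimal_q Q _ hQD₀
  refine ⟨D' ∪ {e}, ⟨⟨e, by simp⟩, ?_, hQD'.2.1, ?_⟩, by simp⟩
  · exact Finset.union_subset hQD'.1 (by simpa using heE)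
  · intro F' hF'
    have hD''D' : F' \ {e} ⊆ D' := by
      intro x hx
      rw [Finset.mem_sdiff, Finset.mem_singleton] at hx
      have := hF'.subset hx.1
      rw [Finset.mem_union, Finset.mem_singleton] at this
      tauto
    have hthird : N.maxFlow ≤ (N.del (F' \ {e})).maxFlow + 1 := by
      have := maxFlow_del_mono (N := N) hD''D'
      have h2 := hQD'.2.2
      omega
    by_cases he' : e ∈ F'
    · have hF'eq : F' = (F' \ {e}) ∪ {e} := by
        ext x
        simp only [Finset.mem_union, Finset.mem_sdiff, Finset.mem_singleton]
        constructor
        · intro hx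
          by_cases hxe : x = e
          · exact Or.inr hxe
          · exact Or.inl ⟨hx, hxe⟩
        · rintro (⟨hx, -⟩ | rfl) <;> [exact hx; exact he']
      have hproper : F' \ {e} ⊂ D' := by
        refine Finset.ssubset_iff_subset_ne.mpr ⟨hD''D', ?_⟩
        intro hcon
        apply hF'.ne
        rw [hF'eq, hcon]
      have hnq := hmin _ hproper
      simp only [hQ] at hnq
      push_neg at hnq
      by_cases hsecond : (N.del ((F' \ {e}) ∪ {e})).maxFlow + 2 ≤ N.maxFlow
      · have := hnq (hD''D'.trans hQD'.1) hsecond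
        omega
      · rw [← hF'eq] at hsecond
        omega
    · have hF'D' : F' ⊆ D' := by
        intro x hx
        apply hD''D'
        rw [Finset.mem_sdiff, Finset.mem_singleton]
        exact ⟨hx, fun hxe => he' (hxe ▸ hx)⟩
      have := maxFlow_del_mono (N := N) hF'D'
      have h2 := hQD'.2.2
      omega


end Network

open Network

/-- In an acyclic network with max flow at least 2, every edge on some `s`-`t`
path is contained in some 2-CF. -/
theorem mem_twoCF_of_on_path {V ε : Type} [DecidableEq ε]
    (N : Network V ε) (hA : N.Acyclic) (hflow : 2 ≤ N.maxFlow) :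
    ∀ e, (∃ p, N.IsPath p ∧ e ∈ p) → ∃ F, N.IsKCF 2 F ∧ e ∈ F :=
  Network.main_theorem hA hflow
end

section
/- Let N=(V,E,s,t) be a unit-capacity point-to-point network with D-set D (the union of all capacity factors) and H-set H = E \ D. Then deleting all edges of H does not change the maximum flow: C_{N\H}(s,t) = C_N(s,t). -/
open Network

namespace Network

variable {V ε : Type} [DecidableEq ε]

lemma isWalk_of_del {N : Network V ε} {F : Finset ε} {u v : V} {p : List ε}
    (h : (N.del F).IsWalk u v p) : N.IsWalk u v p := by
  obtain ⟨h1, h2, h3, h4, h5⟩ := h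
  exact ⟨h1, fun e he => (Finset.mem_sdiff.mp (h2 e he)).1, h3, h4, h5⟩

lemma isFlowList_of_del {N : Network V ε} {F : Finset ε} {fs : List (List ε)}
    (h : (N.del F).IsFlowList fs) : N.IsFlowList fs :=
  ⟨fun p hp => ⟨isWalk_of_del (h.1 p hp).1, (h.1 p hp).2⟩, h.2⟩

lemma length_le_card {N : Network V ε} {fs : List (List ε)}
    (h : N.IsFlowList fs) : fs.length ≤ N.edges.card := by
  have hnd : fs.flatten.Nodup := by
    rw [List.nodup_flatten]
    exact ⟨fun l hl => (h.1 l hl).2, h.2.imp fun hpq => hpq⟩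
  have hsub : fs.flatten.toFinset ⊆ N.edges := by
    intro e he
    rw [List.mem_toFinset, List.mem_flatten] at he
    obtain ⟨p, hp, hep⟩ := he
    exact (h.1 p hp).1.2.1 e hep
  have h1 : fs.flatten.length ≤ N.edges.card := by
    rw [← List.toFinset_card_of_nodup hnd]
    exact Finset.card_le_card hsub
  refine le_trans ?_ h1
  rw [List.length_flatten]
  calc fs.length = (fs.map List.length).length := by simp
    _ ≤ (fs.map List.length).sum := by
        apply List.length_le_sum_of_one_le
        intro i hi
        rw [List.mem_map] at hi
        obtain ⟨p, hp, rfl⟩ := hi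
        exact List.length_pos_iff.mpr (h.1 p hp).1.1

lemma hasFlow_zero_s16 (N : Network V ε) : N.HasFlow 0 :=
  ⟨[], ⟨fun p hp => absurd hp List.not_mem_nil, List.Pairwise.nil⟩, rfl⟩

lemma maxFlow_del_le (N : Network V ε) (F : Finset ε) :
    (N.del F).maxFlow ≤ N.maxFlow := by
  apply csSup_le_csSup
  · exact ⟨N.edges.card, fun n hn => by
      obtain ⟨fs, hfs, hlen⟩ := hn; exact hlen ▸ length_le_card hfs⟩
  · exact ⟨0, hasFlow_zero_s16 _⟩
  · rintro n ⟨fs, hfs, hlen⟩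
    exact ⟨fs, isFlowList_of_del hfs, hlen⟩

lemma del_empty (N : Network V ε) : N.del (∅ : Finset ε) = N := by
  simp [Network.del]

end Network

/-- Deleting the `H`-set (the edges in no capacity factor) does not change the
maximum flow. -/
theorem del_Hset_maxFlow {V ε : Type} [DecidableEq ε]
    (N : Network V ε) (H : Finset ε)
    (hH : ∀ e, e ∈ H ↔ e ∈ N.edges ∧ ∀ F, N.IsCF F → e ∉ F) :
    (N.del H).maxFlow = N.maxFlow := by
  classical
  by_contra hne
  have hlt : (N.del H).maxFlow < N.maxFlow :=
    lt_of_le_of_ne (maxFlow_del_le N H) hne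
  set S : Finset (Finset ε) :=
    H.powerset.filter (fun F => (N.del F).maxFlow < N.maxFlow) with hS
  have hHS : H ∈ S := by
    simp [hS, hlt]
  obtain ⟨F, hFS, hmin⟩ := S.exists_minimal ⟨H, hHS⟩
  have hFH : F ⊆ H := Finset.mem_powerset.mp (Finset.mem_filter.mp hFS).1
  have hPF : (N.del F).maxFlow < N.maxFlow := (Finset.mem_filter.mp hFS).2
  have hFne : F.Nonempty := by
    rcases F.eq_empty_or_nonempty with rfl | h
    · rw [del_empty] at hPF; exact absurd hPF (lt_irrefl _)
    · exact h
  have hFE : F ⊆ N.edges := fun e he => ((hH e).mp (hFH he)).1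
  have hCF : N.IsCF F := by
    refine ⟨hFne, hFE, hPF, fun F' hF' => ?_⟩
    have hnS : F' ∉ S := fun hmem => not_subset_of_ssubset hF' (hmin hmem hF'.subset)
    have : ¬ (N.del F').maxFlow < N.maxFlow := by
      intro hlt'
      exact hnS (Finset.mem_filter.mpr
        ⟨Finset.mem_powerset.mpr (hF'.subset.trans hFH), hlt'⟩)
    exact le_antisymm (maxFlow_del_le N F') (not_lt.mp this)
  obtain ⟨e, heF⟩ := hFne
  exact ((hH e).mp (hFH heF)).2 F hCF heF
end

section
/- Let N=(V,E,s,t) be an acyclic unit-capacity point-to-point network, with topological labeling L:V→ℤ satisfying L(u) < L(v) for every edge ⟨u,v⟩. Let f be a flow decomposing N into C_N(s,t) edge-disjoint s-t paths, let e=⟨u_k,u_{k+1}⟩ lie on one such path p=(u_1,…,u_l), and let f' be f with path p removed. Then in the residual network of N\{e} with respect to f', there is no directed path from s to t. -/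
open Network

namespace NoAug

open Network

variable {V ε : Type} [DecidableEq ε]

/-- Vertex sequence of a walk, extended beyond the end by `v`. -/
def vert (M : Network V ε) (q : List ε) (v : V) (i : ℕ) : V :=
  if h : i < q.length then M.tail (q.get ⟨i, h⟩) else v

lemma vert_zero {M : Network V ε} {u v : V} {q : List ε} (hq : M.IsWalk u v q) :
    vert M q v 0 = u := by
  have h0 : 0 < q.length := List.length_pos_iff.mpr hq.1
  rw [vert, dif_pos h0]; exact hq.2.2.2.1 h0

lemma vert_tail (M : Network V ε) (q : List ε) (v : V) (i : ℕ) (h : i < q.length) :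
    vert M q v i = M.tail (q.get ⟨i, h⟩) := dif_pos h

lemma vert_last (M : Network V ε) (q : List ε) (v : V) :
    vert M q v q.length = v := dif_neg (lt_irrefl _)

lemma vert_head {M : Network V ε} {u v : V} {q : List ε} (hq : M.IsWalk u v q)
    (i : ℕ) (h : i < q.length) :
    M.head (q.get ⟨i, h⟩) = vert M q v (i + 1) := by
  by_cases h' : i + 1 < q.length
  · rw [vert, dif_pos h']; exact hq.2.2.1 i h'
  · rw [vert, dif_neg h']
    have hi : i = q.length - 1 := by omega
    subst hi
    exact hq.2.2.2.2 (by omega)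

lemma cross (c : ℤ) : ∀ (n : ℕ) (g : ℕ → ℤ), g 0 < c → c ≤ g n →
    ∃ i < n, g i < c ∧ c ≤ g (i + 1) := by
  intro n
  induction n with
  | zero => intro g h0 hn; omega
  | succ n ih =>
    intro g h0 hn
    by_cases h : g n < c
    · exact ⟨n, Nat.lt_succ_self n, h, hn⟩
    · obtain ⟨i, hi, h1, h2⟩ := ih g h0 (by omega)
      exact ⟨i, Nat.lt_succ_of_lt hi, h1, h2⟩

lemma mono (g : ℕ → ℤ) (n : ℕ) (hg : ∀ i < n, g i < g (i + 1)) :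
    ∀ i j, i ≤ j → j ≤ n → g i ≤ g j := by
  intro i j hij hjn
  obtain ⟨d, rfl⟩ := Nat.exists_eq_add_of_le hij
  clear hij
  induction d with
  | zero => simp
  | succ d ih =>
    have h1 : g (i + d) < g (i + d + 1) := hg _ (by omega)
    have h2 : g i ≤ g (i + d) := ih (by omega)
    have h3 : i + (d + 1) = (i + d) + 1 := rfl
    rw [h3]
    exact le_trans h2 (le_of_lt h1)

end NoAug

open NoAug in
/-- In an acyclic network decomposed by a maximum flow `f` into edge-disjoint
`s`-`t` paths, if `e` lies on the path `p` of `f`, then the residual network of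
`N \ {e}` w.r.t. the flow `f` with `p` removed has no directed `s`-`t` path. -/
theorem no_augmenting_path {V ε : Type} [DecidableEq ε]
    (N : Network V ε) (hA : N.Acyclic) (L : V → ℤ)
    (hL : ∀ e ∈ N.edges, L (N.tail e) < L (N.head e))
    (f : List (List ε)) (hf : N.IsFlowList f) (hlen : f.length = N.maxFlow)
    (hcover : ∀ e ∈ N.edges, ∃ p ∈ f, e ∈ p)
    (p : List ε) (hp : p ∈ f) (e : ε) (he : e ∈ p) :
    ¬ ∃ q, ((N.del {e}).residual (usedEdges (f.erase p))).IsWalk N.s N.t q := by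
  rintro ⟨q, hq⟩
  set used := usedEdges (f.erase p) with hused
  set M := (N.del {e}).residual used with hM
  -- the walk `p` in `N`
  have hpw : N.IsWalk N.s N.t p := (hf.1 p hp).1
  -- label sequence along `p`
  set gp : ℕ → ℤ := fun i => L (vert N p N.t i) with hgp
  have hstep : ∀ i < p.length, gp i < gp (i + 1) := by
    intro i hi
    have hmem : p.get ⟨i, hi⟩ ∈ N.edges := hpw.2.1 _ (List.get_mem p ⟨i, hi⟩)
    have := hL _ hmem
    simp only [hgp]
    rw [vert_tail N p N.t i hi, ← vert_head hpw i hi]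
    exact this
  have hmono : ∀ i j, i ≤ j → j ≤ p.length → gp i ≤ gp j := mono gp p.length hstep
  -- index of `e` in `p`
  obtain ⟨⟨k, hk⟩, hke⟩ := List.get_of_mem he
  set c : ℤ := L (N.head e) with hc
  have hck : c = gp (k + 1) := by
    simp only [hgp]; rw [← vert_head hpw k hk, hke]
  have htek : L (N.tail e) = gp k := by
    simp only [hgp]; rw [vert_tail N p N.t k hk, hke]
  have hek : gp k < gp (k + 1) := hstep k hk
  have hsc : L N.s < c := by
    have h0 : gp 0 ≤ gp k := hmono 0 k (Nat.zero_le _) (le_of_lt hk)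
    have hs0 : L N.s = gp 0 := by simp only [hgp]; rw [vert_zero hpw]
    omega
  have htc : c ≤ L N.t := by
    have h1 : gp (k + 1) ≤ gp p.length := hmono (k + 1) p.length hk (le_refl _)
    have ht : gp p.length = L N.t := by simp only [hgp]; rw [vert_last]
    omega
  -- label sequence along the residual walk `q`
  set gq : ℕ → ℤ := fun i => L (vert M q N.t i) with hgq
  have hq0 : gq 0 < c := by
    simp only [hgq]; rw [vert_zero hq]; exact hsc
  have hqn : c ≤ gq q.length := by
    simp only [hgq]; rw [vert_last]; exact htc
  obtain ⟨i, hi, h1, h2⟩ := cross c q.length gq hq0 hqn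
  set qi := q.get ⟨i, hi⟩ with hqi
  have h1' : L (M.tail qi) < c := by
    rw [← vert_tail M q N.t i hi]; exact h1
  have h2' : c ≤ L (M.head qi) := by
    rw [vert_head hq i hi]; exact h2
  have hqiE : qi ∈ M.edges := hq.2.1 _ (List.get_mem q ⟨i, hi⟩)
  have hqiE' : qi ∈ N.edges ∧ qi ≠ e := by
    have : qi ∈ N.edges \ {e} := hqiE
    simpa [Finset.mem_sdiff] using this
  by_cases hu : qi ∈ used
  · -- reversed edge: labels decrease, contradiction with topological order
    have ht : M.tail qi = N.head qi := by
      simp only [hM, Network.residual, Network.del, if_pos hu]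
    have hh : M.head qi = N.tail qi := by
      simp only [hM, Network.residual, Network.del, if_pos hu]
    have := hL qi hqiE'.1
    rw [ht] at h1'; rw [hh] at h2'
    omega
  · -- forward edge: must be an edge of `p`, but the only crossing edge of `p` is `e`
    have ht : M.tail qi = N.tail qi := by
      simp only [hM, Network.residual, Network.del, if_neg hu]
    have hh : M.head qi = N.head qi := by
      simp only [hM, Network.residual, Network.del, if_neg hu]
    rw [ht] at h1'; rw [hh] at h2'
    -- `qi` lies on `p`
    obtain ⟨p', hp'f, hqip'⟩ := hcover qi hqiE'.1
    have hpp : p' = p := by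
      by_contra hne
      have : p' ∈ f.erase p := (List.mem_erase_of_ne hne).mpr hp'f
      have : qi ∈ (f.erase p).flatten := List.mem_flatten.mpr ⟨p', this, hqip'⟩
      exact hu (List.mem_toFinset.mpr this)
    rw [hpp] at hqip'
    obtain ⟨⟨j, hj⟩, hje⟩ := List.get_of_mem hqip'
    have hjk : j ≠ k := by
      intro hjk; subst hjk
      exact hqiE'.2 (by rw [← hje, hke])
    have htj : L (N.tail qi) = gp j := by
      simp only [hgp]; rw [vert_tail N p N.t j hj, hje]
    have hhj : L (N.head qi) = gp (j + 1) := by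
      simp only [hgp]; rw [← vert_head hpw j hj, hje]
    rcases Nat.lt_or_ge j k with h | h
    · have : gp (j + 1) ≤ gp k := hmono (j + 1) k h (le_of_lt hk)
      omega
    · have hkj : k + 1 ≤ j := by omega
      have : gp (k + 1) ≤ gp j := hmono (k + 1) j hkj (le_of_lt hj)
      omega
end
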